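/- The loop algebra of a left K-loop is a K-Hopf loop: let k be a commutative ring and (L, ·, e) a loop satisfying the left Bol identity, equipped with an inversion map a ↦ a⁻¹ such that a⁻¹·(a·b) = b, (a⁻¹)⁻¹ = a, and the automorphic inverse property (a·b)⁻¹ = a⁻¹·b⁻¹ hold for all a, b ∈ L. On the free k-module k[L] (finitely supported functions L → k), extend · bilinearly to a product, define Δ as the linear extension of a ↦ a ⊗ a, ε as the linear extension of a ↦ 1, and S as the linear extension of a ↦ a⁻¹. Then for all x, y, z ∈ k[L]: (i) x₍₁₎·(y·(x₍₂₎·z)) = (x₍₁₎·(y·x₍₂₎))·z; (ii) x₍₁₎·(S(x₍₂₎)·y) = ε(x)y = S(x₍₁₎)·(x₍₂₎·y); (iii) S(x·y) = S(x)·S(y); (iv) Δ(S(x)) = S(x₍₁₎) ⊗ S(x₍₂₎). -/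

import Mathlib

open TensorProduct

/-- The bilinear extension of a loop product to the free module `k[L]`. -/
noncomputable def loopMul {k L : Type*} [CommRing k] (mul : L → L → L) :
    (L →₀ k) →ₗ[k] (L →₀ k) →ₗ[k] (L →₀ k) :=
  Finsupp.lift ((L →₀ k) →ₗ[k] (L →₀ k)) k L fun a =>
    Finsupp.lift (L →₀ k) k L fun b => Finsupp.single (mul a b) 1

/-- The coproduct on `k[L]`, the linear extension of `a ↦ a ⊗ a`. -/
noncomputable def loopComul (k L : Type*) [CommRing k] :
    (L →₀ k) →ₗ[k] (L →₀ k) ⊗[k] (L →₀ k) :=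
  Finsupp.lift ((L →₀ k) ⊗[k] (L →₀ k)) k L fun a =>
    Finsupp.single a 1 ⊗ₜ[k] Finsupp.single a 1

/-- The counit on `k[L]`, the linear extension of `a ↦ 1`. -/
noncomputable def loopCounit (k L : Type*) [CommRing k] : (L →₀ k) →ₗ[k] k :=
  Finsupp.lift k k L fun _ => 1

/-- The antipode on `k[L]`, the linear extension of `a ↦ a⁻¹`. -/
noncomputable def loopAntipode {k L : Type*} [CommRing k] (inv : L → L) :
    (L →₀ k) →ₗ[k] (L →₀ k) :=
  Finsupp.lift (L →₀ k) k L fun a => Finsupp.single (inv a) 1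

section helpers
variable {k L : Type*} [CommRing k]

lemma loopMul_single (mul : L → L → L) (a b : L) (r s : k) :
    loopMul mul (Finsupp.single a r) (Finsupp.single b s)
      = Finsupp.single (mul a b) (r * s) := by
  simp [loopMul, Finsupp.lift_apply, Finsupp.sum_single_index, Finsupp.smul_single,
    mul_comm]

lemma loopComul_single (a : L) (r : k) :
    loopComul k L (Finsupp.single a r)
      = r • (Finsupp.single a (1:k) ⊗ₜ[k] Finsupp.single a (1:k)) := by
  simp [loopComul, Finsupp.lift_apply, Finsupp.sum_single_index]

lemma loopAntipode_single (inv : L → L) (a : L) (r : k) :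
    loopAntipode inv (Finsupp.single a r) = Finsupp.single (inv a) r := by
  simp [loopAntipode, Finsupp.lift_apply, Finsupp.sum_single_index, Finsupp.smul_single]

lemma loopCounit_single (a : L) (r : k) :
    loopCounit k L (Finsupp.single a r) = r := by
  simp [loopCounit, Finsupp.lift_apply, Finsupp.sum_single_index]

end helpers

/-- The loop algebra `k[L]` of a left K-loop `L` is a K-Hopf loop:
(i) the linearized left Bol identity holds; (ii) the antipode satisfies the
linearized left inverse property; (iii) the antipode is multiplicative;
(iv) the antipode is comultiplicative. -/
theorem loop_algebra_is_kHopfLoop {k L : Type*} [CommRing k]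
    (mul : L → L → L) (e : L) (inv : L → L)
    (he_left : ∀ a, mul e a = a) (he_right : ∀ a, mul a e = a)
    (hex_left : ∀ a b, ∃! x, mul a x = b)
    (hex_right : ∀ a b, ∃! y, mul y a = b)
    (hbol : ∀ a b c, mul a (mul b (mul a c)) = mul (mul a (mul b a)) c)
    (hinv_left : ∀ a b, mul (inv a) (mul a b) = b)
    (hinv_inv : ∀ a, inv (inv a) = a)
    (hAIP : ∀ a b, inv (mul a b) = mul (inv a) (inv b)) :
    (∀ x y z : L →₀ k,
      TensorProduct.lift ((loopMul mul).compl₁₂ LinearMap.id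
          ((loopMul mul y) ∘ₗ ((loopMul mul).flip z))) (loopComul k L x)
        = TensorProduct.lift (((loopMul mul).compl₁₂ LinearMap.id (loopMul mul y)).compr₂
          ((loopMul mul).flip z)) (loopComul k L x)) ∧
    (∀ x y : L →₀ k,
      TensorProduct.lift ((loopMul mul).compl₁₂ LinearMap.id
          (((loopMul mul).flip y) ∘ₗ loopAntipode inv)) (loopComul k L x)
        = loopCounit k L x • y ∧
      TensorProduct.lift ((loopMul mul).compl₁₂ (loopAntipode inv)
          ((loopMul mul).flip y)) (loopComul k L x)
        = loopCounit k L x • y) ∧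
    (∀ x y : L →₀ k,
      loopAntipode inv (loopMul mul x y)
        = loopMul mul (loopAntipode inv x) (loopAntipode inv y)) ∧
    (∀ x : L →₀ k,
      loopComul k L (loopAntipode inv x)
        = TensorProduct.map (loopAntipode inv) (loopAntipode inv) (loopComul k L x)) := by
  have hinv_right : ∀ a b, mul a (mul (inv a) b) = b := fun a b => by
    have h := hinv_left (inv a) b
    rwa [hinv_inv] at h
  refine ⟨?_, ?_, ?_, ?_⟩
  · intro x y z
    induction x using Finsupp.induction_linear with
    | zero => simp
    | add f g hf hg => simp [map_add, hf, hg]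
    | single a r =>
      simp only [loopComul_single, map_smul, TensorProduct.lift.tmul,
        LinearMap.compl₁₂_apply, LinearMap.compr₂_apply, LinearMap.flip_apply,
        LinearMap.comp_apply, LinearMap.id_apply]
      congr 1
      induction y using Finsupp.induction_linear with
      | zero => simp
      | add f g hf hg => simp [map_add, LinearMap.add_apply, hf, hg]
      | single b s =>
        induction z using Finsupp.induction_linear with
        | zero => simp
        | add f g hf hg => simp [map_add, LinearMap.add_apply, hf, hg]
        | single c t => simp only [loopMul_single, hbol, one_mul, mul_one]
  · intro x y
    constructor
    · induction x using Finsupp.induction_linear with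
      | zero => simp
      | add f g hf hg => simp [map_add, hf, hg, add_smul]
      | single a r =>
        simp only [loopComul_single, map_smul, TensorProduct.lift.tmul,
          LinearMap.compl₁₂_apply, LinearMap.flip_apply, LinearMap.comp_apply,
          LinearMap.id_apply, loopAntipode_single, loopCounit_single]
        congr 1
        induction y using Finsupp.induction_linear with
        | zero => simp
        | add f g hf hg => simp [map_add, hf, hg]
        | single b s => simp only [loopMul_single, hinv_right, one_mul]
    · induction x using Finsupp.induction_linear with
      | zero => simp
      | add f g hf hg => simp [map_add, hf, hg, add_smul]
      | single a r =>
        simp only [loopComul_single, map_smul, TensorProduct.lift.tmul,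
          LinearMap.compl₁₂_apply, LinearMap.flip_apply,
          loopAntipode_single, loopCounit_single]
        congr 1
        induction y using Finsupp.induction_linear with
        | zero => simp
        | add f g hf hg => simp [map_add, hf, hg]
        | single b s => simp only [loopMul_single, hinv_left, one_mul]
  · intro x y
    induction x using Finsupp.induction_linear with
    | zero => simp
    | add f g hf hg => simp [map_add, LinearMap.add_apply, hf, hg]
    | single a r =>
      induction y using Finsupp.induction_linear with
      | zero => simp
      | add f g hf hg => simp [map_add, hf, hg]
      | single b s => simp only [loopMul_single, loopAntipode_single, hAIP]
  · intro x
    induction x using Finsupp.induction_linear with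
    | zero => simp
    | add f g hf hg => simp [map_add, hf, hg]
    | single a r =>
      simp [loopAntipode_single, loopComul_single, TensorProduct.smul_tmul,
        TensorProduct.tmul_smul]
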